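/- Let n ≥ 4 and let r, r' be integers with 1 ≤ r < r' and 2r' ≤ n. Then in S_n the following relation holds: t_{2r} · t_{2r'} = v_{2r} · ∏_{i=r}^{r'-1} (t_{2i+1}^{-1} · u_{2i+2}), where the product is taken over i = r, r+1, ..., r'-1 in increasing order. -/
import Mathlib


/- We work in the symmetric group on `Fin n` (representing `{1, ..., n}` via `i ↦ i - 1`).
The paper multiplies permutations left-to-right: `(π₁ · π₂)(i) = π₂(π₁(i))`,
while Mathlib's `*` on `Equiv.Perm` is function composition: `(π₁ * π₂)(i) = π₁(π₂(i))`.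
Hence a paper product `A · B · C` is rendered below as `C * B * A`. -/

/-- `sP n i` is the transposition `sᵢ = (i, i+1)` (1-indexed), for `1 ≤ i ≤ n - 1`. -/
def sP (n i : ℕ) : Equiv.Perm (Fin n) :=
  if h : 1 ≤ i ∧ i < n then
    Equiv.swap ⟨i - 1, lt_of_le_of_lt (Nat.sub_le i 1) h.2⟩ ⟨i, h.2⟩
  else 1

/-- `tP n m` is `t_m = s₁ · s₂ ⋯ s_{m-1}` (paper's left-to-right product, so here the
factor for larger index is multiplied on the left).  `tP n 0 = tP n 1 = 1`. -/
def tP (n m : ℕ) : Equiv.Perm (Fin n) :=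
  (List.range (m - 1)).foldl (fun g j => sP n (j + 1) * g) 1

/-- `uP n r` is `u_{2r} = t_{2r-2} · s_{2r-1}` (paper order; here reversed). -/
def uP (n r : ℕ) : Equiv.Perm (Fin n) := sP n (2 * r - 1) * tP n (2 * r - 2)

/-- `vP n r` is `v_{2r} = t_{2r}²`. -/
def vP (n r : ℕ) : Equiv.Perm (Fin n) := (tP n (2 * r)) ^ 2

lemma sP_inv (n i : ℕ) : (sP n i)⁻¹ = sP n i := by
  unfold sP; split
  · exact Equiv.swap_inv _ _
  · exact inv_one

lemma tP_succ (n k : ℕ) : tP n (k + 1) = sP n k * tP n k := by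
  cases k with
  | zero => simp [tP, sP]
  | succ j =>
      unfold tP
      simp [List.range_succ]

lemma keyP (n m : ℕ) :
    tP n (2 * m + 2) = uP n (m + 1) * (tP n (2 * m + 1))⁻¹ * tP n (2 * m) := by
  have h1 : tP n (2 * m + 2) = sP n (2 * m + 1) * tP n (2 * m + 1) := tP_succ n (2 * m + 1)
  have h2 : tP n (2 * m + 1) = sP n (2 * m) * tP n (2 * m) := tP_succ n (2 * m)
  have hu : uP n (m + 1) = sP n (2 * m + 1) * tP n (2 * m) := by
    unfold uP
    congr 2 <;> omega
  rw [h1, h2, hu, mul_inv_rev, sP_inv]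
  simp [mul_assoc]

lemma mainP (n r : ℕ) : ∀ d, 1 ≤ d →
    tP n (2 * (r + d)) * tP n (2 * r) =
      ((List.range d).foldl
        (fun acc j => uP n (r + j + 1) * (tP n (2 * (r + j) + 1))⁻¹ * acc) 1) * vP n r := by
  intro d hd
  induction d with
  | zero => exact absurd hd (by norm_num)
  | succ e ih =>
      rcases Nat.eq_zero_or_pos e with he | he
      · subst he
        have h2 : 2 * (r + 1) = 2 * r + 2 := by ring
        rw [h2, keyP]
        simp only [show List.range 1 = [0] from rfl, List.foldl_cons, List.foldl_nil, Nat.add_zero, mul_one]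
        unfold vP
        simp [pow_two, mul_assoc]
      · have h2 : 2 * (r + (e + 1)) = 2 * (r + e) + 2 := by ring
        rw [h2, keyP, List.range_succ, List.foldl_append, List.foldl_cons, List.foldl_nil]
        have hre : r + e + 1 = (r + e) + 1 := rfl
        simp only [mul_assoc]
        rw [ih he]
        simp [mul_assoc]

/-- for `1 ≤ r < r'` with `2r' ≤ n`,
`t_{2r} · t_{2r'} = v_{2r} · ∏_{i=r}^{r'-1} (t_{2i+1}⁻¹ · u_{2i+2})` (paper left-to-right
product over `i` increasing; rendered here in composition order, so each new factor is
multiplied on the left and `v_{2r}` ends up rightmost).  The index `j ∈ range (r'-r)`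
corresponds to `i = r + j`, `uP n (i+1) = u_{2i+2}`, and `vP n r = v_{2r}`. -/
theorem rel_t_v_prod (n r r' : ℕ) (hn : 4 ≤ n) (hr : 1 ≤ r) (hrr : r < r')
    (hrn : 2 * r' ≤ n) :
    tP n (2 * r') * tP n (2 * r) =
      ((List.range (r' - r)).foldl
        (fun acc j => uP n (r + j + 1) * (tP n (2 * (r + j) + 1))⁻¹ * acc) 1) * vP n r := by
  obtain ⟨d, rfl⟩ : ∃ d, r' = r + d := ⟨r' - r, by omega⟩
  rw [Nat.add_sub_cancel_left]
  exact mainP n r d (by omega)
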